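/- Let t > 0, λ > 0, μ > 0 with μ ≠ λ, and set ξ = log(λ/μ)/(λ − μ) and γ(t,λ,μ) = (λ − μ e^{(λ−μ)t})/(λ e^{(λ−μ)t} − μ). Then γ(t,λ,μ) < 0 if t > ξ, γ(t,λ,μ) > 0 if t < ξ, and γ(t,λ,μ) = 0 if t = ξ. -/

import Mathlib

open Real

theorem stmt_2 (t lam mu : ℝ) (ht : 0 < t) (hlam : 0 < lam) (hmu : 0 < mu) (hne : mu ≠ lam) :
    ((t > Real.log (lam / mu) / (lam - mu) →
        (lam - mu * Real.exp ((lam - mu) * t)) / (lam * Real.exp ((lam - mu) * t) - mu) < 0) ∧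
     (t < Real.log (lam / mu) / (lam - mu) →
        0 < (lam - mu * Real.exp ((lam - mu) * t)) / (lam * Real.exp ((lam - mu) * t) - mu)) ∧
     (t = Real.log (lam / mu) / (lam - mu) →
        (lam - mu * Real.exp ((lam - mu) * t)) / (lam * Real.exp ((lam - mu) * t) - mu) = 0)) := by
  have hdiv : (0:ℝ) < lam / mu := div_pos hlam hmu
  have hlog : Real.exp (Real.log (lam/mu)) = lam/mu := Real.exp_log hdiv
  have hEpos := Real.exp_pos ((lam - mu) * t)
  have hlm : lam ≠ mu := fun h => hne h.symm
  rcases hlm.lt_or_gt with hc | hc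
  · -- lam < mu
    have hdneg : lam - mu < 0 := by linarith
    have hE1 : Real.exp ((lam - mu) * t) < 1 := by
      rw [show (1:ℝ) = Real.exp 0 by simp]
      exact Real.exp_lt_exp.mpr (by nlinarith)
    have hden : lam * Real.exp ((lam - mu) * t) - mu < 0 := by nlinarith
    refine ⟨?_, ?_, ?_⟩
    · intro h
      have h2 : (lam - mu) * t < Real.log (lam/mu) := by
        have := (div_lt_iff_of_neg hdneg).mp h
        linarith [mul_comm t (lam - mu)]
      have h3 : Real.exp ((lam - mu) * t) < lam / mu := by
        rw [← hlog]; exact Real.exp_lt_exp.mpr h2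
      have hnum : 0 < lam - mu * Real.exp ((lam - mu) * t) := by
        rw [lt_div_iff₀ hmu] at h3; nlinarith
      exact div_neg_of_pos_of_neg hnum hden
    · intro h
      have h2 : Real.log (lam/mu) < (lam - mu) * t := by
        have := (lt_div_iff_of_neg hdneg).mp h
        linarith [mul_comm t (lam - mu)]
      have h3 : lam / mu < Real.exp ((lam - mu) * t) := by
        rw [← hlog]; exact Real.exp_lt_exp.mpr h2
      have hnum : lam - mu * Real.exp ((lam - mu) * t) < 0 := by
        rw [div_lt_iff₀ hmu] at h3; nlinarith
      exact div_pos_of_neg_of_neg hnum hden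
    · intro h
      have h2 : (lam - mu) * t = Real.log (lam/mu) := by
        field_simp [sub_ne_zero.mpr (ne_of_lt hc)] at h ⊢; linarith [h]
      have h3 : Real.exp ((lam - mu) * t) = lam / mu := by rw [h2, hlog]
      have hnum : lam - mu * Real.exp ((lam - mu) * t) = 0 := by
        rw [h3]; field_simp; ring
      rw [hnum, zero_div]
  · -- mu < lam
    have hdpos : 0 < lam - mu := by linarith
    have hE1 : 1 < Real.exp ((lam - mu) * t) := by
      rw [show (1:ℝ) = Real.exp 0 by simp]
      exact Real.exp_lt_exp.mpr (by nlinarith)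
    have hden : 0 < lam * Real.exp ((lam - mu) * t) - mu := by nlinarith
    refine ⟨?_, ?_, ?_⟩
    · intro h
      have h2 : Real.log (lam/mu) < (lam - mu) * t := by
        have := (div_lt_iff₀ hdpos).mp h
        linarith [mul_comm t (lam - mu)]
      have h3 : lam / mu < Real.exp ((lam - mu) * t) := by
        rw [← hlog]; exact Real.exp_lt_exp.mpr h2
      have hnum : lam - mu * Real.exp ((lam - mu) * t) < 0 := by
        rw [div_lt_iff₀ hmu] at h3; nlinarith
      exact div_neg_of_neg_of_pos hnum hden
    · intro h
      have h2 : (lam - mu) * t < Real.log (lam/mu) := by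
        have := (lt_div_iff₀ hdpos).mp h
        linarith [mul_comm t (lam - mu)]
      have h3 : Real.exp ((lam - mu) * t) < lam / mu := by
        rw [← hlog]; exact Real.exp_lt_exp.mpr h2
      have hnum : 0 < lam - mu * Real.exp ((lam - mu) * t) := by
        rw [lt_div_iff₀ hmu] at h3; nlinarith
      exact div_pos hnum hden
    · intro h
      have h2 : (lam - mu) * t = Real.log (lam/mu) := by
        field_simp [ne_of_gt hdpos] at h ⊢; linarith [h]
      have h3 : Real.exp ((lam - mu) * t) = lam / mu := by rw [h2, hlog]
      have hnum : lam - mu * Real.exp ((lam - mu) * t) = 0 := by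
        rw [h3]; field_simp; ring
      rw [hnum, zero_div]
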